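/- Let ≿ be a niveloidal preference on 𝓕 with nonconstant affine utility index u : X → ℝ (with 0 in the interior of u(X)) representing it as in the maxmin representation. Define C* = {c ∈ 𝒞 : min_{p∈Δ}(∫ u(f) dp + c(p)) ≤ u(x_f) for all f ∈ 𝓕}, where x_f is a certainty equivalent of f. Then: (a) C* is grounded; (b) for every f ∈ 𝓕, max_{c∈C*} min_{p∈Δ}(∫ u(f) dp + c(p)) = u(x_f), so C* satisfies the maxmin representation of ≿; and (c) every grounded subset C ⊆ 𝒞 satisfying the maxmin representation of ≿ with the same u is contained in C*; thus C* is the unique maximal such grounded subset. -/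

import Mathlib

open scoped Pointwise
open MeasureTheory

namespace Paper

variable {S V : Type*}

/-- An algebra of subsets of `S` (the events `Σ`). -/
structure IsSetAlg (𝓐 : Set (Set S)) : Prop where
  empty_mem : ∅ ∈ 𝓐
  compl_mem : ∀ A ∈ 𝓐, Aᶜ ∈ 𝓐
  union_mem : ∀ A ∈ 𝓐, ∀ B ∈ 𝓐, A ∪ B ∈ 𝓐

/-- `B₀(Σ)`: real-valued `Σ`-measurable simple functions. -/
def IsSimpleFn (𝓐 : Set (Set S)) (φ : S → ℝ) : Prop :=
  (Set.range φ).Finite ∧ ∀ t : ℝ, φ ⁻¹' {t} ∈ 𝓐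

open Classical in
/-- The integral of a simple function with respect to a finitely additive set function. -/
noncomputable def fint (p : Set S → ℝ) (φ : S → ℝ) : ℝ :=
  if h : (Set.range φ).Finite then ∑ t ∈ h.toFinset, t * p (φ ⁻¹' {t}) else 0

/-- `Δ`: the finitely additive probabilities on `Σ` (canonically extended by `0` off `Σ`). -/
def Δset (𝓐 : Set (Set S)) : Set (Set S → ℝ) :=
  {p | p Set.univ = 1 ∧ (∀ A ∈ 𝓐, 0 ≤ p A) ∧
    (∀ A ∈ 𝓐, ∀ B ∈ 𝓐, Disjoint A B → p (A ∪ B) = p A + p B) ∧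
    ∀ A : Set S, A ∉ 𝓐 → p A = 0}

/-- The weak* topology `σ(Δ, B₀(Σ))`, i.e. the topology induced by the evaluation maps
`p ↦ ∫ φ dp`, `φ ∈ B₀(Σ)`. -/
noncomputable def weakStar (𝓐 : Set (Set S)) : TopologicalSpace (Set S → ℝ) :=
  TopologicalSpace.induced
    (fun p => fun φ : {φ : S → ℝ // IsSimpleFn 𝓐 φ} => fint p φ.1)
    Pi.topologicalSpace

/-- `𝒞`: the weak*-lower semicontinuous convex functions `c : Δ → (-∞, ∞]`. -/
def Cscr (𝓐 : Set (Set S)) : Set ((Set S → ℝ) → EReal) :=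
  {c | (∀ p ∈ Δset 𝓐, ⊥ < c p) ∧
    (@LowerSemicontinuousOn (Set S → ℝ) EReal (weakStar 𝓐) _ c (Δset 𝓐)) ∧
    ∀ p ∈ Δset 𝓐, ∀ q ∈ Δset 𝓐, ∀ a b : ℝ, 0 ≤ a → 0 ≤ b → a + b = 1 →
      c (a • p + b • q) ≤ (a : EReal) * c p + (b : EReal) * c q}

/-- A subset `C ⊆ 𝒞` is grounded if `sup_{c ∈ C} min_{p ∈ Δ} c p = 0`. -/
def Grounded (𝓐 : Set (Set S)) (C : Set ((Set S → ℝ) → EReal)) : Prop :=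
  (⨆ c ∈ C, ⨅ p ∈ Δset 𝓐, c p) = 0

/-- `min_{p ∈ Δ} (∫ φ dp + c p)`. -/
noncomputable def minVal (𝓐 : Set (Set S)) (c : (Set S → ℝ) → EReal) (φ : S → ℝ) : EReal :=
  ⨅ p ∈ Δset 𝓐, ((fint p φ : EReal) + c p)

/-- `max_{q ∈ Δ} (∫ φ dq - b q)`. -/
noncomputable def maxVal (𝓐 : Set (Set S)) (b : (Set S → ℝ) → EReal) (φ : S → ℝ) : EReal :=
  ⨆ q ∈ Δset 𝓐, ((fint q φ : EReal) - b q)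

/-- `max_{c ∈ C} min_{p ∈ Δ} (∫ φ dp + c p)`. -/
noncomputable def maxminVal (𝓐 : Set (Set S)) (C : Set ((Set S → ℝ) → EReal))
    (φ : S → ℝ) : EReal :=
  ⨆ c ∈ C, minVal 𝓐 c φ

/-- `min_{b ∈ B} max_{q ∈ Δ} (∫ φ dq - b q)`. -/
noncomputable def minmaxVal (𝓐 : Set (Set S)) (B : Set ((Set S → ℝ) → EReal))
    (φ : S → ℝ) : EReal :=
  ⨅ b ∈ B, maxVal 𝓐 b φ

/-- `min_{p ∈ P} ∫ φ dp`. -/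
noncomputable def minPVal (P : Set (Set S → ℝ)) (φ : S → ℝ) : EReal :=
  ⨅ p ∈ P, (fint p φ : EReal)

/-- `max_{q ∈ Q} ∫ φ dq`. -/
noncomputable def maxQVal (Q : Set (Set S → ℝ)) (φ : S → ℝ) : EReal :=
  ⨆ q ∈ Q, (fint q φ : EReal)

/-- `max_{P ∈ Pfam} min_{p ∈ P} ∫ φ dp`. -/
noncomputable def maxminPVal (Pfam : Set (Set (Set S → ℝ))) (φ : S → ℝ) : EReal :=
  ⨆ P ∈ Pfam, minPVal P φ

/-- `min_{Q ∈ Qfam} max_{q ∈ Q} ∫ φ dq`. -/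
noncomputable def minmaxQVal (Qfam : Set (Set (Set S → ℝ))) (φ : S → ℝ) : EReal :=
  ⨅ Q ∈ Qfam, maxQVal Q φ

open Classical in
/-- The convex-analytic indicator `δ_P` of a set `P`. -/
noncomputable def ind (P : Set (Set S → ℝ)) : (Set S → ℝ) → EReal :=
  fun p => if p ∈ P then (0 : EReal) else ⊤

variable [AddCommGroup V] [Module ℝ V]

/-- `𝓕`: the simple acts, i.e. `Σ`-measurable maps `f : S → X` with finitely many values. -/
def Acts (𝓐 : Set (Set S)) (X : Set V) : Set (S → V) :=
  {f | (∀ s, f s ∈ X) ∧ (Set.range f).Finite ∧ ∀ v : V, f ⁻¹' {v} ∈ 𝓐}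

/-- The constant act with value `x`. -/
def constAct (x : V) : S → V := fun _ : S => x

/-- The mixture `α f + (1 - α) g` of two acts, defined statewise. -/
def mix (α : ℝ) (f g : S → V) : S → V := fun s => α • f s + (1 - α) • g s

/-- The statewise utility `u ∘ f` of an act. -/
def uAct (u : V → ℝ) (f : S → V) : S → ℝ := fun s => u (f s)

/-- `u : X → ℝ` is nonconstant and affine on `X`. -/
def IsNonconstAffine (X : Set V) (u : V → ℝ) : Prop :=
  (∀ x ∈ X, ∀ y ∈ X, ∀ t ∈ Set.Icc (0 : ℝ) 1,
      u (t • x + (1 - t) • y) = t * u x + (1 - t) * u y) ∧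
  ∃ x ∈ X, ∃ y ∈ X, u x ≠ u y

/-- A niveloidal preference: Axioms A1 (weak order), A2 (monotonicity), A3 (Archimedean)
and A4 (weak C-independence). -/
structure NiveloidalPref (𝓐 : Set (Set S)) (X : Set V)
    (R : (S → V) → (S → V) → Prop) : Prop where
  nontrivial : ∃ f ∈ Acts 𝓐 X, ∃ g ∈ Acts 𝓐 X, R f g ∧ ¬ R g f
  complete : ∀ f ∈ Acts 𝓐 X, ∀ g ∈ Acts 𝓐 X, R f g ∨ R g f
  transitive : ∀ f ∈ Acts 𝓐 X, ∀ g ∈ Acts 𝓐 X, ∀ h ∈ Acts 𝓐 X, R f g → R g h → R f h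
  monotone : ∀ f ∈ Acts 𝓐 X, ∀ g ∈ Acts 𝓐 X,
    (∀ s : S, R (constAct (f s)) (constAct (g s))) → R f g
  archimedean : ∀ f ∈ Acts 𝓐 X, ∀ g ∈ Acts 𝓐 X, ∀ h ∈ Acts 𝓐 X,
    (R f g ∧ ¬ R g f) → (R g h ∧ ¬ R h g) →
    ∃ α ∈ Set.Ioo (0 : ℝ) 1, ∃ β ∈ Set.Ioo (0 : ℝ) 1,
      (R (mix α f h) g ∧ ¬ R g (mix α f h)) ∧
      (R g (mix β f h) ∧ ¬ R (mix β f h) g)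
  weakCIndep : ∀ f ∈ Acts 𝓐 X, ∀ g ∈ Acts 𝓐 X, ∀ x ∈ X, ∀ y ∈ X,
    ∀ α ∈ Set.Ioo (0 : ℝ) 1,
    R (mix α f (constAct x)) (mix α g (constAct x)) →
    R (mix α f (constAct y)) (mix α g (constAct y))

/-- An invariant biseparable preference: Axioms A1 (weak order), A2 (monotonicity),
A3 (Archimedean) and A7 (C-independence). -/
structure IBPref (𝓐 : Set (Set S)) (X : Set V)
    (R : (S → V) → (S → V) → Prop) : Prop where
  nontrivial : ∃ f ∈ Acts 𝓐 X, ∃ g ∈ Acts 𝓐 X, R f g ∧ ¬ R g f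
  complete : ∀ f ∈ Acts 𝓐 X, ∀ g ∈ Acts 𝓐 X, R f g ∨ R g f
  transitive : ∀ f ∈ Acts 𝓐 X, ∀ g ∈ Acts 𝓐 X, ∀ h ∈ Acts 𝓐 X, R f g → R g h → R f h
  monotone : ∀ f ∈ Acts 𝓐 X, ∀ g ∈ Acts 𝓐 X,
    (∀ s : S, R (constAct (f s)) (constAct (g s))) → R f g
  archimedean : ∀ f ∈ Acts 𝓐 X, ∀ g ∈ Acts 𝓐 X, ∀ h ∈ Acts 𝓐 X,
    (R f g ∧ ¬ R g f) → (R g h ∧ ¬ R h g) →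
    ∃ α ∈ Set.Ioo (0 : ℝ) 1, ∃ β ∈ Set.Ioo (0 : ℝ) 1,
      (R (mix α f h) g ∧ ¬ R g (mix α f h)) ∧
      (R g (mix β f h) ∧ ¬ R (mix β f h) g)
  cIndep : ∀ f ∈ Acts 𝓐 X, ∀ g ∈ Acts 𝓐 X, ∀ x ∈ X, ∀ α ∈ Set.Ioo (0 : ℝ) 1,
    (R f g ↔ R (mix α f (constAct x)) (mix α g (constAct x)))

/-- Axiom A5 (uncertainty aversion). -/
def UncertaintyAverse (𝓐 : Set (Set S)) (X : Set V)
    (R : (S → V) → (S → V) → Prop) : Prop :=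
  ∀ f ∈ Acts 𝓐 X, ∀ g ∈ Acts 𝓐 X, ∀ α ∈ Set.Ioo (0 : ℝ) 1,
    R f g → R g f → R (mix α f g) f

/-- `xf` assigns to every act a certainty equivalent. -/
def IsCE (𝓐 : Set (Set S)) (X : Set V) (R : (S → V) → (S → V) → Prop)
    (xf : (S → V) → V) : Prop :=
  ∀ f ∈ Acts 𝓐 X, xf f ∈ X ∧ R f (constAct (xf f)) ∧ R (constAct (xf f)) f

/-- `C*`: the maximal candidate set of penalty functions. -/
def CstarOf (𝓐 : Set (Set S)) (X : Set V) (u : V → ℝ) (xf : (S → V) → V) :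
    Set ((Set S → ℝ) → EReal) :=
  {c | c ∈ Cscr 𝓐 ∧ ∀ f ∈ Acts 𝓐 X, minVal 𝓐 c (uAct u f) ≤ (u (xf f) : EReal)}

/-- `B*`: the maximal candidate set of reward functions. -/
def BstarOf (𝓐 : Set (Set S)) (X : Set V) (u : V → ℝ) (xf : (S → V) → V) :
    Set ((Set S → ℝ) → EReal) :=
  {b | b ∈ Cscr 𝓐 ∧ ∀ f ∈ Acts 𝓐 X, (u (xf f) : EReal) ≤ maxVal 𝓐 b (uAct u f)}

/-- `Pfam*`: the maximal family of prior sets (maxmin form). -/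
def PstarOf (𝓐 : Set (Set S)) (X : Set V) (u : V → ℝ) (xf : (S → V) → V) :
    Set (Set (Set S → ℝ)) :=
  {P | P ⊆ Δset 𝓐 ∧ P.Nonempty ∧ Convex ℝ P ∧ (@IsCompact _ (weakStar 𝓐) P) ∧
    ∀ f ∈ Acts 𝓐 X, minPVal P (uAct u f) ≤ (u (xf f) : EReal)}

/-- `Qfam*`: the maximal family of prior sets (minmax form). -/
def QstarOf (𝓐 : Set (Set S)) (X : Set V) (u : V → ℝ) (xf : (S → V) → V) :
    Set (Set (Set S → ℝ)) :=
  {Q | Q ⊆ Δset 𝓐 ∧ Q.Nonempty ∧ Convex ℝ Q ∧ (@IsCompact _ (weakStar 𝓐) Q) ∧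
    ∀ f ∈ Acts 𝓐 X, (u (xf f) : EReal) ≤ maxQVal Q (uAct u f)}

/-- `C` yields the maxmin representation of `R` with utility `u`. -/
def MaxminRep (𝓐 : Set (Set S)) (X : Set V) (R : (S → V) → (S → V) → Prop)
    (u : V → ℝ) (C : Set ((Set S → ℝ) → EReal)) : Prop :=
  ∀ f ∈ Acts 𝓐 X, ∀ g ∈ Acts 𝓐 X,
    (R f g ↔ maxminVal 𝓐 C (uAct u g) ≤ maxminVal 𝓐 C (uAct u f))

/-- All indicated maxima over `C` and minima over `Δ` are attained. -/
def MaxminAttained (𝓐 : Set (Set S)) (X : Set V) (u : V → ℝ)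
    (C : Set ((Set S → ℝ) → EReal)) : Prop :=
  ∀ f ∈ Acts 𝓐 X,
    (∀ c ∈ C, ∃ p ∈ Δset 𝓐,
      minVal 𝓐 c (uAct u f) = (fint p (uAct u f) : EReal) + c p) ∧
    ∃ c ∈ C, maxminVal 𝓐 C (uAct u f) = minVal 𝓐 c (uAct u f)

/-- `B` yields the minmax representation of `R` with utility `u`. -/
def MinmaxRep (𝓐 : Set (Set S)) (X : Set V) (R : (S → V) → (S → V) → Prop)
    (u : V → ℝ) (B : Set ((Set S → ℝ) → EReal)) : Prop :=
  ∀ f ∈ Acts 𝓐 X, ∀ g ∈ Acts 𝓐 X,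
    (R f g ↔ minmaxVal 𝓐 B (uAct u g) ≤ minmaxVal 𝓐 B (uAct u f))

/-- All indicated minima over `B` and maxima over `Δ` are attained. -/
def MinmaxAttained (𝓐 : Set (Set S)) (X : Set V) (u : V → ℝ)
    (B : Set ((Set S → ℝ) → EReal)) : Prop :=
  ∀ f ∈ Acts 𝓐 X,
    (∀ b ∈ B, ∃ q ∈ Δset 𝓐,
      maxVal 𝓐 b (uAct u f) = (fint q (uAct u f) : EReal) - b q) ∧
    ∃ b ∈ B, minmaxVal 𝓐 B (uAct u f) = maxVal 𝓐 b (uAct u f)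

/-- A family of nonempty, convex, weak*-compact subsets of `Δ`. -/
def IsPriorFamily (𝓐 : Set (Set S)) (Pfam : Set (Set (Set S → ℝ))) : Prop :=
  Pfam.Nonempty ∧ ∀ P ∈ Pfam,
    P ⊆ Δset 𝓐 ∧ P.Nonempty ∧ Convex ℝ P ∧ (@IsCompact _ (weakStar 𝓐) P)

/-- `Pfam` yields the maxmin representation of `R` with utility `u`. -/
def PRep (𝓐 : Set (Set S)) (X : Set V) (R : (S → V) → (S → V) → Prop)
    (u : V → ℝ) (Pfam : Set (Set (Set S → ℝ))) : Prop :=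
  ∀ f ∈ Acts 𝓐 X, ∀ g ∈ Acts 𝓐 X,
    (R f g ↔ maxminPVal Pfam (uAct u g) ≤ maxminPVal Pfam (uAct u f))

/-- All indicated maxima over `Pfam` and minima over `P` are attained. -/
def PAttained (𝓐 : Set (Set S)) (X : Set V) (u : V → ℝ)
    (Pfam : Set (Set (Set S → ℝ))) : Prop :=
  ∀ f ∈ Acts 𝓐 X,
    (∀ P ∈ Pfam, ∃ p ∈ P, minPVal P (uAct u f) = (fint p (uAct u f) : EReal)) ∧
    ∃ P ∈ Pfam, maxminPVal Pfam (uAct u f) = minPVal P (uAct u f)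

/-- `Qfam` yields the minmax representation of `R` with utility `u`. -/
def QRep (𝓐 : Set (Set S)) (X : Set V) (R : (S → V) → (S → V) → Prop)
    (u : V → ℝ) (Qfam : Set (Set (Set S → ℝ))) : Prop :=
  ∀ f ∈ Acts 𝓐 X, ∀ g ∈ Acts 𝓐 X,
    (R f g ↔ minmaxQVal Qfam (uAct u g) ≤ minmaxQVal Qfam (uAct u f))

/-- All indicated minima over `Qfam` and maxima over `Q` are attained. -/
def QAttained (𝓐 : Set (Set S)) (X : Set V) (u : V → ℝ)
    (Qfam : Set (Set (Set S → ℝ))) : Prop :=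
  ∀ f ∈ Acts 𝓐 X,
    (∀ Q ∈ Qfam, ∃ q ∈ Q, maxQVal Q (uAct u f) = (fint q (uAct u f) : EReal)) ∧
    ∃ Q ∈ Qfam, minmaxQVal Qfam (uAct u f) = maxQVal Q (uAct u f)

/-- `c₁ ≈_u c₂`: `c₁` and `c₂` induce the same variational functional on `B₀(Σ, u(X))`. -/
def ApproxEq (𝓐 : Set (Set S)) (X : Set V) (u : V → ℝ)
    (c₁ c₂ : (Set S → ℝ) → EReal) : Prop :=
  ∀ φ : S → ℝ, IsSimpleFn 𝓐 φ → (∀ s, φ s ∈ u '' X) →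
    minVal 𝓐 c₁ φ = minVal 𝓐 c₂ φ

/-- `R₁` is more ambiguity averse than `R₂`. -/
def MoreAmbiguityAverse (𝓐 : Set (Set S)) (X : Set V)
    (R₁ R₂ : (S → V) → (S → V) → Prop) : Prop :=
  ∀ f ∈ Acts 𝓐 X, ∀ x ∈ X, R₂ (constAct x) f → R₁ (constAct x) f

/-- `u₁` and `u₂` are positive affine transformations of each other on `X`. -/
def CardEquiv (X : Set V) (u₁ u₂ : V → ℝ) : Prop :=
  ∃ a b : ℝ, 0 < a ∧ ∀ x ∈ X, u₂ x = a * u₁ x + b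

/-- A capacity on `(S, Σ)`. -/
def IsCapacity (𝓐 : Set (Set S)) (π : Set S → ℝ) : Prop :=
  π ∅ = 0 ∧ π Set.univ = 1 ∧ ∀ A ∈ 𝓐, ∀ B ∈ 𝓐, A ⊆ B → π A ≤ π B

/-- The Choquet integral of a (simple) function against a capacity. -/
noncomputable def choquet (π : Set S → ℝ) (φ : S → ℝ) : ℝ :=
  (∫ t in Set.Ioi (0 : ℝ), π {s | t ≤ φ s}) +
    ∫ t in Set.Iio (0 : ℝ), (π {s | t ≤ φ s} - 1)

section Stmt2Aux

open Set Filter Topology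

/-! ### General lemmas -/

/-- A lower semicontinuous `EReal`-valued function on a nonempty compact set attains
its minimum. -/
theorem lsc_exists_min {α : Type*} [TopologicalSpace α] {K : Set α}
    (hK : IsCompact K) (hne : K.Nonempty) {g : α → EReal}
    (hg : LowerSemicontinuousOn g K) : ∃ p ∈ K, ∀ q ∈ K, g p ≤ g q := by
  by_contra hcon
  push_neg at hcon
  haveI hcs : CompactSpace K := isCompact_iff_compactSpace.mp hK
  have hch : ∀ x : K, ∃ y : EReal, y < g x ∧ ∃ z ∈ K, g z < y := by
    intro x
    obtain ⟨q, hqK, hlt⟩ := hcon x x.2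
    obtain ⟨y, h1, h2⟩ := exists_between hlt
    exact ⟨y, h2, q, hqK, h1⟩
  choose Y hY1 hY2 using hch
  have hnh : ∀ w : K, 𝓝 w = Filter.comap Subtype.val (𝓝[K] (w : α)) := by
    intro w
    rw [nhdsWithin, Filter.comap_inf, Filter.comap_principal,
      Subtype.coe_preimage_self, Filter.principal_univ, inf_top_eq]
    exact nhds_subtype_eq_comap
  have hopen : ∀ x : K, IsOpen {w : K | Y x < g ↑w} := by
    intro x
    rw [isOpen_iff_mem_nhds]
    intro w hw
    have hlsc : ∀ᶠ x' in 𝓝[K] (w : α), Y x < g x' := hg w w.2 (Y x) hw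
    rw [hnh w]
    exact Filter.preimage_mem_comap hlsc
  obtain ⟨F, hF⟩ := isCompact_univ.elim_finite_subcover
    (fun x : K => {w : K | Y x < g ↑w}) hopen
    (fun w _ => Set.mem_iUnion.mpr ⟨w, hY1 w⟩)
  have hFne : F.Nonempty := by
    obtain ⟨p₀, hp₀⟩ := hne
    obtain ⟨x, hxF, _⟩ := Set.mem_iUnion₂.mp (hF (Set.mem_univ (⟨p₀, hp₀⟩ : K)))
    exact ⟨x, hxF⟩
  obtain ⟨x₀, hx₀F, hmin⟩ := F.exists_min_image Y hFne
  obtain ⟨z, hzK, hz⟩ := hY2 x₀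
  have hlt : Y x₀ < g z := by
    obtain ⟨x, hxF, hxU⟩ := Set.mem_iUnion₂.mp (hF (Set.mem_univ (⟨z, hzK⟩ : K)))
    exact lt_of_le_of_lt (hmin x hxF) hxU
  exact absurd hlt (not_lt.mpr hz.le)

/-- Addition of a real constant as an order isomorphism of `EReal`. -/
noncomputable def erealAddIso (r : ℝ) : EReal ≃o EReal where
  toFun x := (r : EReal) + x
  invFun x := x - (r : EReal)
  left_inv x := by
    show (↑r + x) - ↑r = x
    rw [add_comm (r : EReal) x]
    exact EReal.add_sub_cancel_right
  right_inv x := by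
    show ↑r + (x - ↑r) = x
    rw [add_comm (r : EReal) (x - ↑r)]
    exact EReal.sub_add_cancel
  map_rel_iff' := by
    intro a b
    simp only [Equiv.coe_fn_mk]
    rw [add_comm (r : EReal) a, add_comm (r : EReal) b]
    exact (EReal.addLECancellable_coe r).add_le_add_iff_right

theorem ereal_add_iInf {ι : Sort*} (r : ℝ) (f : ι → EReal) :
    (r : EReal) + ⨅ i, f i = ⨅ i, ((r : EReal) + f i) :=
  (erealAddIso r).map_iInf f

theorem ereal_add_iSup {ι : Sort*} (r : ℝ) (f : ι → EReal) :
    (r : EReal) + ⨆ i, f i = ⨆ i, ((r : EReal) + f i) :=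
  (erealAddIso r).map_iSup f

/-! ### Set algebra and `Δ` lemmas -/

variable {S V : Type*} {𝓐 : Set (Set S)}

theorem IsSetAlg.univ_mem (hA : IsSetAlg 𝓐) : Set.univ ∈ 𝓐 := by
  have h := hA.compl_mem ∅ hA.empty_mem
  simpa using h

theorem IsSetAlg.finset_biUnion_mem (hA : IsSetAlg 𝓐) {ι' : Type*} (s : Finset ι')
    (g : ι' → Set S) (h : ∀ i ∈ s, g i ∈ 𝓐) : (⋃ i ∈ s, g i) ∈ 𝓐 := by
  classical
  induction s using Finset.cons_induction with
  | empty => simpa using hA.empty_mem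
  | cons a s ha ih =>
      have : (⋃ i ∈ Finset.cons a s ha, g i) = g a ∪ ⋃ i ∈ s, g i := by
        simp [Finset.cons_eq_insert, Set.biUnion_insert]
      rw [this]
      exact hA.union_mem _ (h a (Finset.mem_cons_self a s)) _
        (ih fun i hi => h i (Finset.mem_cons_of_mem hi))

theorem Δset.p_empty (hA : IsSetAlg 𝓐) {p : Set S → ℝ} (hp : p ∈ Δset 𝓐) : p ∅ = 0 := by
  have h := hp.2.2.1 ∅ hA.empty_mem ∅ hA.empty_mem (by simp)
  simp only [Set.union_empty] at h
  linarith

theorem Δset.p_le_one (hA : IsSetAlg 𝓐) {p : Set S → ℝ} (hp : p ∈ Δset 𝓐)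
    {A : Set S} (hm : A ∈ 𝓐) : p A ≤ 1 := by
  have h := hp.2.2.1 A hm Aᶜ (hA.compl_mem A hm) disjoint_compl_right
  rw [Set.union_compl_self, hp.1] at h
  have h2 := hp.2.1 Aᶜ (hA.compl_mem A hm)
  linarith

open Classical in
theorem dirac_mem (hA : IsSetAlg 𝓐) (s₀ : S) :
    (fun A => if A ∈ 𝓐 ∧ s₀ ∈ A then (1 : ℝ) else 0) ∈ Δset 𝓐 := by
  classical
  refine ⟨by simp [hA.univ_mem], ?_, ?_, ?_⟩
  · intro A hm
    by_cases h : s₀ ∈ A <;> simp [hm, h]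
  · intro A hmA B hmB hd
    have hu : A ∪ B ∈ 𝓐 := hA.union_mem A hmA B hmB
    by_cases h1 : s₀ ∈ A
    · have h2 : s₀ ∉ B := fun h2 => Set.disjoint_left.mp hd h1 h2
      simp [hmA, hmB, hu, h1, h2]
    · by_cases h2 : s₀ ∈ B <;> simp [hmA, hmB, hu, h1, h2]
  · intro A hm
    simp [hm]

/-! ### `fint` lemmas -/

theorem fint_eq_sum {p : Set S → ℝ} (h0 : p ∅ = 0) {φ : S → ℝ}
    (hfin : (Set.range φ).Finite) {T : Finset ℝ} (hT : ∀ t ∈ Set.range φ, t ∈ T) :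
    fint p φ = ∑ t ∈ T, t * p (φ ⁻¹' {t}) := by
  rw [fint, dif_pos hfin]
  refine Finset.sum_subset (fun t ht => hT t (hfin.mem_toFinset.mp ht)) ?_
  intro t _ hnt
  have hpre : φ ⁻¹' {t} = ∅ :=
    Set.preimage_singleton_eq_empty.mpr fun hc => hnt (hfin.mem_toFinset.mpr hc)
  rw [hpre, h0, mul_zero]

theorem fint_const [Nonempty S] (hA : IsSetAlg 𝓐) {p : Set S → ℝ}
    (hp : p ∈ Δset 𝓐) (t : ℝ) : fint p (fun _ : S => t) = t := by
  have hr : Set.range (fun _ : S => t) = {t} := Set.range_const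
  have hfin : (Set.range (fun _ : S => t)).Finite := hr ▸ Set.finite_singleton t
  rw [fint_eq_sum (Δset.p_empty hA hp) hfin (T := {t})
    (fun x hx => by rw [hr] at hx; simpa using hx)]
  have hpre : (fun _ : S => t) ⁻¹' {t} = Set.univ := by ext s; simp
  rw [Finset.sum_singleton, hpre, hp.1, mul_one]

open Classical in
/-- The indicator function of a set. -/
noncomputable def indF (A : Set S) : S → ℝ := fun s => if s ∈ A then 1 else 0

theorem indF_preimage_one (A : Set S) : indF A ⁻¹' {1} = A := by
  ext s; by_cases h : s ∈ A <;> simp [indF, h]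

theorem isSimpleFn_indF (hA : IsSetAlg 𝓐) {A : Set S} (hm : A ∈ 𝓐) :
    IsSimpleFn 𝓐 (indF A) := by
  constructor
  · refine Set.Finite.subset ((Set.finite_singleton 1).insert 0) ?_
    rintro _ ⟨s, rfl⟩
    by_cases h : s ∈ A <;> simp [indF, h]
  · intro t
    rcases eq_or_ne t 1 with rfl | h1
    · rw [indF_preimage_one]; exact hm
    rcases eq_or_ne t 0 with rfl | h0
    · have hpre : indF A ⁻¹' {0} = Aᶜ := by
        ext s; by_cases h : s ∈ A <;> simp [indF, h]
      rw [hpre]; exact hA.compl_mem A hm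
    · have hpre : indF A ⁻¹' {t} = ∅ := by
        ext s; by_cases h : s ∈ A <;> simp [indF, h, Ne.symm h1, Ne.symm h0]
      rw [hpre]; exact hA.empty_mem

theorem fint_indF (hA : IsSetAlg 𝓐) {p : Set S → ℝ} (hp : p ∈ Δset 𝓐)
    {A : Set S} (hm : A ∈ 𝓐) : fint p (indF A) = p A := by
  have hfin := (isSimpleFn_indF hA hm).1
  rw [fint_eq_sum (Δset.p_empty hA hp) hfin (T := {0, 1})
    (by rintro _ ⟨s, rfl⟩; by_cases h : s ∈ A <;> simp [indF, h])]
  rw [Finset.sum_insert (by norm_num), Finset.sum_singleton, indF_preimage_one]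
  ring

/-! ### Acts lemmas -/

theorem constAct_mem [AddCommGroup V] [Module ℝ V] (hA : IsSetAlg 𝓐) {X : Set V}
    {x : V} (hx : x ∈ X) : constAct x ∈ Acts 𝓐 X := by
  refine ⟨fun _ => hx, ?_, ?_⟩
  · exact (Set.finite_singleton x).subset (by rintro _ ⟨s, rfl⟩; simp [constAct])
  · intro v
    rcases eq_or_ne v x with rfl | h
    · have hpre : (constAct v : S → V) ⁻¹' {v} = Set.univ := by ext s; simp [constAct]
      rw [hpre]; exact hA.univ_mem
    · have hpre : (constAct x : S → V) ⁻¹' {v} = ∅ := by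
        ext s; simp [constAct, Ne.symm h]
      rw [hpre]; exact hA.empty_mem

theorem isSimpleFn_uAct [AddCommGroup V] [Module ℝ V] (hA : IsSetAlg 𝓐) {X : Set V}
    {u : V → ℝ} {f : S → V} (hf : f ∈ Acts 𝓐 X) : IsSimpleFn 𝓐 (uAct u f) := by
  classical
  obtain ⟨hfX, hfin, hpre⟩ := hf
  constructor
  · have hr : Set.range (uAct u f) = u '' Set.range f := by
      rw [show uAct u f = u ∘ f from rfl, Set.range_comp]
    exact hr ▸ hfin.image u
  · intro t
    have hpre2 : uAct u f ⁻¹' {t} =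
        ⋃ v ∈ hfin.toFinset.filter (fun v => u v = t), f ⁻¹' {v} := by
      ext s
      simp only [Set.mem_iUnion, Finset.mem_filter, Set.Finite.mem_toFinset,
        Set.mem_preimage, Set.mem_singleton_iff]
      constructor
      · intro h
        exact ⟨f s, ⟨⟨s, rfl⟩, h⟩, rfl⟩
      · rintro ⟨v, ⟨_, hv⟩, hfs⟩
        show u (f s) = t
        rw [hfs, hv]
    rw [hpre2]
    exact hA.finset_biUnion_mem _ _ fun v _ => hpre v

/-! ### Compactness of `Δ` -/

/-- The index type of simple functions. -/
abbrev SimpleIdx (𝓐 : Set (Set S)) := {φ : S → ℝ // IsSimpleFn 𝓐 φ}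

/-- The indicator of a measurable set, as an index. -/
noncomputable def indIdx (hA : IsSetAlg 𝓐) {A : Set S} (hm : A ∈ 𝓐) : SimpleIdx 𝓐 :=
  ⟨indF A, isSimpleFn_indF hA hm⟩

/-- The evaluation map realizing the weak* topology. -/
noncomputable def emap (𝓐 : Set (Set S)) : (Set S → ℝ) → SimpleIdx 𝓐 → ℝ :=
  fun p φ => fint p φ.1

/-- The closed set cutting out the image of `Δ` under `emap`. -/
noncomputable def Tset (hA : IsSetAlg 𝓐) : Set (SimpleIdx 𝓐 → ℝ) :=
  {y | y (indIdx hA hA.univ_mem) = 1} ∩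
  (⋂ (A : Set S) (hm : A ∈ 𝓐), {y | 0 ≤ y (indIdx hA hm)}) ∩
  (⋂ (A : Set S) (hmA : A ∈ 𝓐) (B : Set S) (hmB : B ∈ 𝓐) (_ : Disjoint A B),
    {y | y (indIdx hA (hA.union_mem A hmA B hmB)) = y (indIdx hA hmA) + y (indIdx hA hmB)}) ∩
  (⋂ φ : SimpleIdx 𝓐,
    {y | y φ = ∑ t ∈ φ.2.1.toFinset, t * y (indIdx hA (φ.2.2 t))})

theorem isClosed_Tset (hA : IsSetAlg 𝓐) : IsClosed (Tset hA) := by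
  refine IsClosed.inter (IsClosed.inter (IsClosed.inter ?_ ?_) ?_) ?_
  · exact isClosed_eq (continuous_apply _) continuous_const
  · exact isClosed_iInter fun A => isClosed_iInter fun hm =>
      isClosed_le continuous_const (continuous_apply _)
  · exact isClosed_iInter fun A => isClosed_iInter fun hmA =>
      isClosed_iInter fun B => isClosed_iInter fun hmB => isClosed_iInter fun _ =>
      isClosed_eq (continuous_apply _)
      ((continuous_apply (indIdx hA hmA)).add (continuous_apply (indIdx hA hmB)))
  · exact isClosed_iInter fun φ => isClosed_eq (continuous_apply _)
      (continuous_finset_sum _ fun t _ => continuous_const.mul (continuous_apply _))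

theorem image_emap_eq (hA : IsSetAlg 𝓐) : emap 𝓐 '' Δset 𝓐 = Tset hA := by
  apply Set.Subset.antisymm
  · rintro _ ⟨p, hp, rfl⟩
    refine ⟨⟨⟨?_, ?_⟩, ?_⟩, ?_⟩
    · show fint p (indF Set.univ) = 1
      rw [fint_indF hA hp hA.univ_mem, hp.1]
    · simp only [Set.mem_iInter, Set.mem_setOf_eq]
      intro A hm
      show 0 ≤ fint p (indF A)
      rw [fint_indF hA hp hm]
      exact hp.2.1 A hm
    · simp only [Set.mem_iInter, Set.mem_setOf_eq]
      intro A hmA B hmB hd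
      show fint p (indF (A ∪ B)) = fint p (indF A) + fint p (indF B)
      rw [fint_indF hA hp (hA.union_mem A hmA B hmB), fint_indF hA hp hmA,
        fint_indF hA hp hmB]
      exact hp.2.2.1 A hmA B hmB hd
    · simp only [Set.mem_iInter, Set.mem_setOf_eq]
      intro φ
      show fint p φ.1 = _
      rw [fint, dif_pos φ.2.1]
      refine Finset.sum_congr rfl fun t _ => ?_
      show t * p (φ.1 ⁻¹' {t}) = t * fint p (indF (φ.1 ⁻¹' {t}))
      rw [fint_indF hA hp (φ.2.2 t)]
  · intro y hy
    obtain ⟨⟨⟨h1, h2⟩, h3⟩, h4⟩ := hy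
    simp only [Set.mem_iInter, Set.mem_setOf_eq] at h2 h3 h4
    classical
    refine ⟨fun A => if hm : A ∈ 𝓐 then y (indIdx hA hm) else 0, ⟨?_, ?_, ?_, ?_⟩, ?_⟩
    · simp only [dif_pos hA.univ_mem]; exact h1
    · intro A hm
      simp only [dif_pos hm]; exact h2 A hm
    · intro A hmA B hmB hd
      simp only [dif_pos (hA.union_mem A hmA B hmB), dif_pos hmA, dif_pos hmB]
      exact h3 A hmA B hmB hd
    · intro A hm
      simp only [dif_neg hm]
    · funext φ
      show fint _ φ.1 = y φ
      rw [fint, dif_pos φ.2.1, h4 φ]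
      refine Finset.sum_congr rfl fun t _ => ?_
      simp only [dif_pos (φ.2.2 t)]

theorem isCompact_Δset [Nonempty S] (hA : IsSetAlg 𝓐) :
    @IsCompact _ (weakStar 𝓐) (Δset 𝓐) := by
  letI : TopologicalSpace (Set S → ℝ) := weakStar 𝓐
  have hind : Topology.IsInducing (emap 𝓐) := ⟨rfl⟩
  rw [hind.isCompact_iff]
  refine IsCompact.of_isClosed_subset
    (isCompact_univ_pi fun φ : SimpleIdx 𝓐 =>
      isCompact_Icc (a := -(∑ t ∈ φ.2.1.toFinset, |t|)) (b := ∑ t ∈ φ.2.1.toFinset, |t|))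
    (image_emap_eq hA ▸ isClosed_Tset hA) ?_
  rintro _ ⟨p, hp, rfl⟩
  intro φ _
  have habs : |fint p φ.1| ≤ ∑ t ∈ φ.2.1.toFinset, |t| := by
    rw [fint, dif_pos φ.2.1]
    refine (Finset.abs_sum_le_sum_abs _ _).trans (Finset.sum_le_sum fun t _ => ?_)
    rw [abs_mul, abs_of_nonneg (hp.2.1 _ (φ.2.2 t))]
    calc |t| * p (φ.1 ⁻¹' {t}) ≤ |t| * 1 :=
          mul_le_mul_of_nonneg_left (Δset.p_le_one hA hp (φ.2.2 t)) (abs_nonneg t)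
      _ = |t| := mul_one _
  exact Set.mem_Icc.mpr ⟨neg_le.mp (neg_le.mpr (abs_le.mp habs).1), (abs_le.mp habs).2⟩

theorem continuous_fint {φ : S → ℝ} (hφ : IsSimpleFn 𝓐 φ) :
    @Continuous _ _ (weakStar 𝓐) _ (fun p => fint p φ) := by
  letI : TopologicalSpace (Set S → ℝ) := weakStar 𝓐
  have h : Continuous (emap 𝓐) := continuous_induced_dom
  exact (continuous_apply (⟨φ, hφ⟩ : SimpleIdx 𝓐)).comp h

theorem exists_minimizer [Nonempty S] (hA : IsSetAlg 𝓐)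
    {c : (Set S → ℝ) → EReal} (hc : c ∈ Cscr 𝓐) {φ : S → ℝ} (hφ : IsSimpleFn 𝓐 φ) :
    ∃ p ∈ Δset 𝓐, ∀ q ∈ Δset 𝓐,
      (fint p φ : EReal) + c p ≤ (fint q φ : EReal) + c q := by
  letI : TopologicalSpace (Set S → ℝ) := weakStar 𝓐
  have hK : IsCompact (Δset 𝓐) := isCompact_Δset hA
  have hne : (Δset 𝓐).Nonempty := ⟨_, dirac_mem hA (Classical.arbitrary S)⟩
  have hcont : Continuous fun p : Set S → ℝ => ((fint p φ : ℝ) : EReal) :=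
    continuous_coe_real_ereal.comp (continuous_fint hφ)
  have hlsc : LowerSemicontinuousOn (fun p => (fint p φ : EReal) + c p) (Δset 𝓐) := by
    refine LowerSemicontinuousOn.add' (hcont.lowerSemicontinuous.lowerSemicontinuousOn _)
      hc.2.1 fun x _ => ?_
    exact EReal.continuousAt_add (Or.inl (EReal.coe_ne_top _)) (Or.inl (EReal.coe_ne_bot _))
  exact lsc_exists_min hK hne hlsc

/-! ### maxmin computations -/

theorem minVal_const [Nonempty S] (hA : IsSetAlg 𝓐) (c : (Set S → ℝ) → EReal) (t : ℝ) :
    minVal 𝓐 c (fun _ : S => t) = (t : EReal) + ⨅ p ∈ Δset 𝓐, c p := by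
  rw [minVal]
  calc (⨅ p, ⨅ (_ : p ∈ Δset 𝓐), ((fint p (fun _ : S => t) : EReal) + c p))
      = ⨅ p, ⨅ (_ : p ∈ Δset 𝓐), ((t : EReal) + c p) :=
        iInf_congr fun p => iInf_congr fun hp => by rw [fint_const hA hp t]
    _ = ⨅ p, ((t : EReal) + ⨅ (_ : p ∈ Δset 𝓐), c p) :=
        iInf_congr fun p => (ereal_add_iInf t _).symm
    _ = (t : EReal) + ⨅ p, ⨅ (_ : p ∈ Δset 𝓐), c p := (ereal_add_iInf t _).symm

theorem maxminVal_const [Nonempty S] (hA : IsSetAlg 𝓐)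
    {C : Set ((Set S → ℝ) → EReal)} (hg : Grounded 𝓐 C) (t : ℝ) :
    maxminVal 𝓐 C (fun _ : S => t) = (t : EReal) := by
  rw [maxminVal]
  calc (⨆ c, ⨆ (_ : c ∈ C), minVal 𝓐 c (fun _ : S => t))
      = ⨆ c, ⨆ (_ : c ∈ C), ((t : EReal) + ⨅ p ∈ Δset 𝓐, c p) :=
        iSup_congr fun c => iSup_congr fun hc => minVal_const hA c t
    _ = ⨆ c, ((t : EReal) + ⨆ (_ : c ∈ C), ⨅ p ∈ Δset 𝓐, c p) :=
        iSup_congr fun c => (ereal_add_iSup t _).symm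
    _ = (t : EReal) + ⨆ c, ⨆ (_ : c ∈ C), ⨅ p ∈ Δset 𝓐, c p := (ereal_add_iSup t _).symm
    _ = (t : EReal) + 0 := by rw [hg]
    _ = (t : EReal) := add_zero _

theorem maxmin_eq_ce [Nonempty S] [AddCommGroup V] [Module ℝ V] (hA : IsSetAlg 𝓐)
    {X : Set V} {R : (S → V) → (S → V) → Prop} {u : V → ℝ}
    {C : Set ((Set S → ℝ) → EReal)} (hg : Grounded 𝓐 C)
    (hrepC : MaxminRep 𝓐 X R u C) {xf : (S → V) → V} (hxf : IsCE 𝓐 X R xf)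
    {f : S → V} (hf : f ∈ Acts 𝓐 X) :
    maxminVal 𝓐 C (uAct u f) = (u (xf f) : EReal) := by
  obtain ⟨hxX, hR1, hR2⟩ := hxf f hf
  have hca : (constAct (xf f) : S → V) ∈ Acts 𝓐 X := constAct_mem hA hxX
  have h1 := (hrepC f hf _ hca).mp hR1
  have h2 := (hrepC _ hca f hf).mp hR2
  have hconst : uAct u (constAct (xf f) : S → V) = fun _ : S => u (xf f) := rfl
  rw [hconst, maxminVal_const hA hg] at h1 h2
  exact le_antisymm h2 h1

theorem subset_Cstar [Nonempty S] [AddCommGroup V] [Module ℝ V] (hA : IsSetAlg 𝓐)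
    {X : Set V} {R : (S → V) → (S → V) → Prop} {u : V → ℝ} {xf : (S → V) → V}
    (hxf : IsCE 𝓐 X R xf) {C : Set ((Set S → ℝ) → EReal)} (hsub : C ⊆ Cscr 𝓐)
    (hg : Grounded 𝓐 C) (hrepC : MaxminRep 𝓐 X R u C) :
    C ⊆ CstarOf 𝓐 X u xf := by
  intro c hc
  refine ⟨hsub hc, fun f hf => ?_⟩
  have h1 : minVal 𝓐 c (uAct u f) ≤ maxminVal 𝓐 C (uAct u f) :=
    le_iSup₂ (f := fun c (_ : c ∈ C) => minVal 𝓐 c (uAct u f)) c hc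
  rwa [maxmin_eq_ce hA hg hrepC hxf hf] at h1

end Stmt2Aux


theorem stmt2 {S V : Type*} [Nonempty S] [AddCommGroup V] [Module ℝ V]
    (𝓐 : Set (Set S)) (hA : IsSetAlg 𝓐)
    (X : Set V) (hX : X.Nonempty) (hXc : Convex ℝ X)
    (R : (S → V) → (S → V) → Prop) (hpref : NiveloidalPref 𝓐 X R)
    (u : V → ℝ) (hu : IsNonconstAffine X u) (h0 : (0 : ℝ) ∈ interior (u '' X))
    (hrep : ∃ C ⊆ Cscr 𝓐, Grounded 𝓐 C ∧ MaxminAttained 𝓐 X u C ∧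
      MaxminRep 𝓐 X R u C)
    (xf : (S → V) → V) (hxf : IsCE 𝓐 X R xf) :
    Grounded 𝓐 (CstarOf 𝓐 X u xf) ∧
    (∀ f ∈ Acts 𝓐 X,
      maxminVal 𝓐 (CstarOf 𝓐 X u xf) (uAct u f) = (u (xf f) : EReal)) ∧
    MaxminAttained 𝓐 X u (CstarOf 𝓐 X u xf) ∧
    MaxminRep 𝓐 X R u (CstarOf 𝓐 X u xf) ∧
    ∀ C ⊆ Cscr 𝓐, Grounded 𝓐 C → MaxminAttained 𝓐 X u C → MaxminRep 𝓐 X R u C →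
      C ⊆ CstarOf 𝓐 X u xf := by
  classical
  obtain ⟨C, hCsub, hCg, hCatt, hCrep⟩ := hrep
  have hCss : C ⊆ CstarOf 𝓐 X u xf := subset_Cstar hA hxf hCsub hCg hCrep
  have hstar : ∀ f ∈ Acts 𝓐 X,
      maxminVal 𝓐 (CstarOf 𝓐 X u xf) (uAct u f) = (u (xf f) : EReal) := by
    intro f hf
    refine le_antisymm ?_ ?_
    · rw [maxminVal]
      exact iSup₂_le fun c hc => hc.2 f hf
    · rw [← maxmin_eq_ce hA hCg hCrep hxf hf, maxminVal, maxminVal]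
      exact iSup_le_iSup_of_subset hCss
  have hground : Grounded 𝓐 (CstarOf 𝓐 X u xf) := by
    obtain ⟨x₀, hx₀X, hux₀⟩ := interior_subset h0
    have hf₀ : (constAct x₀ : S → V) ∈ Acts 𝓐 X := constAct_mem hA hx₀X
    have huf₀ : uAct u (constAct x₀ : S → V) = fun _ : S => (0 : ℝ) := by
      funext s; exact hux₀
    have hceq : (u (xf (constAct x₀)) : EReal) = 0 := by
      rw [← maxmin_eq_ce hA hCg hCrep hxf hf₀, huf₀, maxminVal_const hA hCg]
      exact EReal.coe_zero
    unfold Grounded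
    refine le_antisymm ?_ ?_
    · refine iSup₂_le fun c hc => ?_
      have h2 := hc.2 _ hf₀
      rw [huf₀, hceq, minVal_const hA c 0] at h2
      simpa using h2
    · rw [← hCg]
      exact iSup_le_iSup_of_subset hCss
  have hatt : MaxminAttained 𝓐 X u (CstarOf 𝓐 X u xf) := by
    intro f hf
    constructor
    · intro c hc
      obtain ⟨p, hp, hmin⟩ := exists_minimizer hA hc.1 (isSimpleFn_uAct hA hf)
      refine ⟨p, hp, ?_⟩
      rw [minVal]
      exact le_antisymm (iInf₂_le p hp) (le_iInf₂ fun q hq => hmin q hq)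
    · obtain ⟨c, hcC, heq⟩ := (hCatt f hf).2
      refine ⟨c, hCss hcC, ?_⟩
      rw [hstar f hf, ← maxmin_eq_ce hA hCg hCrep hxf hf, heq]
  have hreps : MaxminRep 𝓐 X R u (CstarOf 𝓐 X u xf) := by
    intro f hf g hg
    rw [hstar f hf, hstar g hg, ← maxmin_eq_ce hA hCg hCrep hxf hf,
      ← maxmin_eq_ce hA hCg hCrep hxf hg]
    exact hCrep f hf g hg
  exact ⟨hground, hstar, hatt, hreps, fun C' hC'sub hC'g _ hC'rep =>
    subset_Cstar hA hxf hC'sub hC'g hC'rep⟩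


end Paper
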